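/- Every zigzag in the cross-polytope β_n has length 2n, and the 0-shadow of every zigzag is (up to cyclic shift) of the form i_1, ..., i_n, -i_1, ..., -i_n, where {i_1,...,i_n} is a facet of β_n. Consequently there are exactly 2^{n-2}·(n-1)! zigzags for n ≥ 2 (identifying each zigzag with its reverse). -/

import Mathlib

open scoped Classical

variable {V : Type*}

/-- `C` is a facet (maximal face) of a pure rank-`n` complex: a face with `n` vertices. -/
def IsFacet (n : ℕ) (faces : Finset V → Prop) (C : Finset V) : Prop :=
  faces C ∧ C.card = n

/-- `faces` describes a thin pure simplicial complex of rank `n` over the vertex set `V`: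
it is downward closed, every singleton is a face, every face has at most `n` vertices and is
contained in a facet, and every ridge (face with `n - 1` vertices) lies in exactly two facets. -/
def IsThinComplex (n : ℕ) (faces : Finset V → Prop) : Prop :=
  (∀ v : V, faces {v}) ∧
  (∀ ⦃X Y : Finset V⦄, faces X → Y ⊆ X → faces Y) ∧
  (∀ ⦃X : Finset V⦄, faces X → X.card ≤ n) ∧
  (∀ ⦃X : Finset V⦄, faces X → ∃ C : Finset V, IsFacet n faces C ∧ X ⊆ C) ∧
  (∀ ⦃R : Finset V⦄, faces R → R.card = n - 1 →
    {C : Finset V | IsFacet n faces C ∧ R ⊆ C}.ncard = 2)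

/-- A flag, encoded by the ordered vertex sequence `x_0, …, x_{n-1}` determining it:
the chain of faces is `{x_0} ⊂ {x_0,x_1} ⊂ … ⊂ {x_0,…,x_{n-1}}`, the top being a facet. -/
def IsFlag (n : ℕ) (faces : Finset V → Prop) (F : List V) : Prop :=
  F.length = n ∧ F.Nodup ∧ faces F.toFinset

/-- `G = T(F)` for the zigzag operator `T = σ_{n-1} ∘ ⋯ ∘ σ_0`: if `F` is determined by the
vertex sequence `x_0, x_1, …, x_{n-1}`, then `T(F)` is determined by `x_1, …, x_{n-1}, y` with
`y ≠ x_0`. -/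
def TStep (n : ℕ) (faces : Finset V → Prop) (F G : List V) : Prop :=
  IsFlag n faces F ∧ IsFlag n faces G ∧
    ∃ y : V, G = F.tail ++ [y] ∧ F.head? ≠ some y

/-- A zigzag of length `l`: the orbit `F, T F, T² F, …` of the operator `T` on flags, recorded
as the sequence `i ↦ Tⁱ F`; it is `l`-periodic with `l` the minimal period. -/
def IsZigzag (n : ℕ) (faces : Finset V → Prop) (l : ℕ) (F : ℕ → List V) : Prop :=
  0 < l ∧ (∀ i : ℕ, TStep n faces (F i) (F (i + 1))) ∧ (∀ i : ℕ, F (i + l) = F i) ∧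
    ∀ m : ℕ, 0 < m → (∀ i : ℕ, F (i + m) = F i) → l ≤ m

/-- The set of flags of a zigzag together with those of its reverse zigzag; two zigzags are
identified (a zigzag is identified with its reverse, and with its cyclic shifts) exactly when
these sets coincide. -/
def ZigzagClass (F : ℕ → List V) : Set (List V) :=
  Set.range F ∪ Set.range fun i => (F i).reverse

/-- `G = σ_i(F)`: the flag `G` has the same `j`-faces as `F` for all `j ≠ i`, and a different
`i`-face (the `j`-face of the flag with vertex sequence `F` is `(F.take (j+1)).toFinset`). -/
def SigmaStep (n : ℕ) (faces : Finset V → Prop) (i : ℕ) (F G : List V) : Prop :=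
  IsFlag n faces F ∧ IsFlag n faces G ∧
    (∀ j : ℕ, j < n → j ≠ i → (G.take (j + 1)).toFinset = (F.take (j + 1)).toFinset) ∧
    (G.take (i + 1)).toFinset ≠ (F.take (i + 1)).toFinset

/-- `G = T_δ(F)` where `T_δ = σ_{δ(n-1)} ∘ ⋯ ∘ σ_{δ(0)}`. -/
def TDeltaStep (n : ℕ) (faces : Finset V → Prop) (δ : Equiv.Perm (Fin n))
    (F G : List V) : Prop :=
  ∃ c : ℕ → List V, c 0 = F ∧ c n = G ∧
    ∀ i : Fin n, SigmaStep n faces (δ i) (c i) (c (i + 1))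

/-- A generalized zigzag (δ-zigzag) of length `l`: the orbit of `T_δ` on flags. -/
def IsGenZigzag (n : ℕ) (faces : Finset V → Prop) (δ : Equiv.Perm (Fin n)) (l : ℕ)
    (F : ℕ → List V) : Prop :=
  0 < l ∧ (∀ i : ℕ, TDeltaStep n faces δ (F i) (F (i + 1))) ∧ (∀ i : ℕ, F (i + l) = F i) ∧
    ∀ m : ℕ, 0 < m → (∀ i : ℕ, F (i + m) = F i) → l ≤ m

/-- Adjacency in the facet-adjacency graph `Γ_{n-1}(Δ)`: two distinct facets meeting in a ridge. -/
def FacetAdj (n : ℕ) (faces : Finset V → Prop) (C D : Finset V) : Prop :=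
  IsFacet n faces C ∧ IsFacet n faces D ∧ C ≠ D ∧ (C ∩ D).card = n - 1

/-- `p 0, p 1, …, p m` is a path in the facet-adjacency graph. -/
def IsFacetPath (n : ℕ) (faces : Finset V → Prop) (m : ℕ) (p : ℕ → Finset V) : Prop :=
  ∀ i : ℕ, i < m → FacetAdj n faces (p i) (p (i + 1))

/-- The path distance in the facet-adjacency graph `Γ_{n-1}(Δ)`. -/
noncomputable def facetDist (n : ℕ) (faces : Finset V → Prop) (X Y : Finset V) : ℕ :=
  sInf {m : ℕ | ∃ p : ℕ → Finset V, p 0 = X ∧ p m = Y ∧ IsFacetPath n faces m p}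

/-- The complex is a chamber complex: the facet-adjacency graph is connected. -/
def ChamberConnected (n : ℕ) (faces : Finset V → Prop) : Prop :=
  ∀ C D : Finset V, IsFacet n faces C → IsFacet n faces D →
    ∃ (m : ℕ) (p : ℕ → Finset V), p 0 = C ∧ p m = D ∧ IsFacetPath n faces m p

/-- Faces of the cross-polytope `β_n`: subsets of `{±1,…,±n}` (encoded as `Fin n × Bool`)
containing no antipodal pair. -/
def crossFaces (n : ℕ) (X : Finset (Fin n × Bool)) : Prop :=
  ∀ p ∈ X, (p.1, !p.2) ∉ X


def cneg {n : ℕ} (p : Fin n × Bool) : Fin n × Bool := (p.1, !p.2)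

def tstep {n : ℕ} : List (Fin n × Bool) → List (Fin n × Bool)
  | [] => []
  | a :: t => t ++ [cneg a]

def Good (n : ℕ) (L : List (Fin n × Bool)) : Prop :=
  L.length = n ∧ (L.map Prod.fst).Nodup

lemma cneg_cneg {n : ℕ} (p : Fin n × Bool) : cneg (cneg p) = p := by
  simp [cneg]

lemma cneg_ne {n : ℕ} (p : Fin n × Bool) : cneg p ≠ p := by
  simp [cneg, Prod.ext_iff]

lemma cneg_fst {n : ℕ} (p : Fin n × Bool) : (cneg p).1 = p.1 := rfl

lemma tstep_cons {n : ℕ} (a : Fin n × Bool) (t : List (Fin n × Bool)) :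
    tstep (a :: t) = t ++ [cneg a] := rfl

lemma tstep_length {n : ℕ} (L : List (Fin n × Bool)) (h : L ≠ []) :
    (tstep L).length = L.length := by
  cases L with
  | nil => simp at h
  | cons a t => simp [tstep]

lemma tstep_iter {n : ℕ} (L : List (Fin n × Bool)) (k : ℕ) (hk : k ≤ L.length) :
    tstep^[k] L = L.drop k ++ (L.take k).map cneg := by
  induction k with
  | zero => simp
  | succ k ih =>
    have hk' : k < L.length := hk
    rw [Function.iterate_succ_apply', ih hk'.le]
    have hdrop : L.drop k = L[k] :: L.drop (k + 1) := List.drop_eq_getElem_cons hk'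
    have htake : L.take (k + 1) = L.take k ++ [L[k]] := by
      rw [List.take_succ]
      simp [List.getElem?_eq_getElem hk']
    rw [hdrop, htake, List.cons_append, tstep_cons]
    have h2 : (List.map cneg L).take (k+1)
        = (List.map cneg L).take k ++ [(List.map cneg L)[k]'(by simpa using hk')] := by
      rw [List.take_succ]; simp [List.getElem?_eq_getElem hk']
    simp [h2]

lemma Good.nodup {n : ℕ} {L : List (Fin n × Bool)} (h : Good n L) : L.Nodup :=
  h.2.of_map

lemma Good.ne_nil {n : ℕ} {L : List (Fin n × Bool)} (hn : 0 < n) (h : Good n L) : L ≠ [] := by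
  intro e; rw [e] at h; simp [Good] at h; omega

lemma good_tstep {n : ℕ} {L : List (Fin n × Bool)} (h : Good n L) (hn : 0 < n) :
    Good n (tstep L) := by
  cases L with
  | nil => exact absurd rfl (h.ne_nil hn)
  | cons a t =>
    obtain ⟨h1, h2⟩ := h
    constructor
    · rw [tstep_cons]; simpa using h1
    · rw [tstep_cons, List.map_append]
      simp only [List.map_cons, List.nodup_cons] at h2
      rw [List.nodup_append]
      refine ⟨h2.2, by simp, ?_⟩
      intro x hx z hz
      simp only [List.map_cons, List.map_nil, List.mem_singleton, cneg_fst] at hz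
      subst hz
      exact fun e => h2.1 (e ▸ hx)

lemma good_iter {n : ℕ} {L : List (Fin n × Bool)} (h : Good n L) (hn : 0 < n) (k : ℕ) :
    Good n (tstep^[k] L) := by
  induction k with
  | zero => exact h
  | succ k ih => rw [Function.iterate_succ_apply']; exact good_tstep ih hn

lemma good_map_cneg {n : ℕ} {L : List (Fin n × Bool)} (h : Good n L) :
    Good n (L.map cneg) := by
  refine ⟨by simpa using h.1, ?_⟩
  have : (L.map cneg).map Prod.fst = L.map Prod.fst := by
    rw [List.map_map]; rfl
  rw [this]; exact h.2

lemma tstep_iter_n {n : ℕ} {L : List (Fin n × Bool)} (h : Good n L) :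
    tstep^[n] L = L.map cneg := by
  have hl : L.length ≤ n := le_of_eq h.1
  rw [tstep_iter L n h.1.ge]
  rw [List.drop_eq_nil_of_le hl, List.take_of_length_le hl]
  simp

lemma tstep_iter_two_n {n : ℕ} {L : List (Fin n × Bool)} (h : Good n L) :
    tstep^[2 * n] L = L := by
  have : 2 * n = n + n := by ring
  rw [this, Function.iterate_add_apply, tstep_iter_n h, tstep_iter_n (good_map_cneg h)]
  simp [List.map_map, Function.comp_def, cneg_cneg]

lemma iter_two_n_mul {n : ℕ} {L : List (Fin n × Bool)} (h : Good n L) (hn : 0 < n) (q : ℕ) :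
    tstep^[2 * n * q] L = L := by
  induction q with
  | zero => simp
  | succ q ih =>
    rw [Nat.mul_succ, Function.iterate_add_apply, tstep_iter_two_n h]
    exact ih

lemma iter_mod {n : ℕ} {L : List (Fin n × Bool)} (h : Good n L) (hn : 0 < n) (a : ℕ) :
    tstep^[a] L = tstep^[a % (2 * n)] L := by
  conv_lhs => rw [← Nat.mod_add_div a (2 * n)]
  rw [Nat.add_comm, Function.iterate_add_apply]
  exact iter_two_n_mul (good_iter h hn _) hn _

/-- The vertex 0-shadow sequence of the orbit through `L`. -/
def xseq {n : ℕ} (L : List (Fin n × Bool)) (m : ℕ) : Option (Fin n × Bool) :=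
  (tstep^[m] L)[0]?

lemma xseq_zero_iter {n : ℕ} {M : List (Fin n × Bool)} (h : Good n M) {k : ℕ} (hk : k < n) :
    (tstep^[k] M)[0]? = M[k]? := by
  rw [tstep_iter M k (by rw [h.1]; omega)]
  have hd : 0 < (M.drop k).length := by rw [List.length_drop, h.1]; omega
  rw [List.getElem?_append, if_pos hd, List.getElem?_drop]
  norm_num

lemma xseq_add {n : ℕ} {L : List (Fin n × Bool)} (h : Good n L) (hn : 0 < n) (i : ℕ)
    {k : ℕ} (hk : k < n) : xseq L (i + k) = (tstep^[i] L)[k]? := by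
  rw [xseq, Nat.add_comm, Function.iterate_add_apply,
    xseq_zero_iter (good_iter h hn i) hk]

lemma xseq_add_n {n : ℕ} {L : List (Fin n × Bool)} (h : Good n L) (hn : 0 < n) (m : ℕ) :
    xseq L (m + n) = (xseq L m).map cneg := by
  rw [xseq, xseq, Nat.add_comm, Function.iterate_add_apply, tstep_iter_n (good_iter h hn m),
    List.getElem?_map]

lemma xseq_mod {n : ℕ} {L : List (Fin n × Bool)} (h : Good n L) (hn : 0 < n) (a : ℕ) :
    xseq L a = xseq L (a % (2 * n)) := by
  rw [xseq, xseq, iter_mod h hn]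

lemma fst_getElem_inj {n : ℕ} {M : List (Fin n × Bool)} (h : Good n M) {i j : ℕ}
    (hi : i < M.length) (hj : j < M.length) (he : (M[i]'hi).1 = (M[j]'hj).1) : i = j := by
  have h1 : (M.map Prod.fst)[i]'(by simpa) = (M.map Prod.fst)[j]'(by simpa) := by
    rw [List.getElem_map, List.getElem_map]; exact he
  exact h.2.getElem_inj_iff.mp h1

lemma xseq_inj {n : ℕ} {L : List (Fin n × Bool)} (h : Good n L) (hn : 0 < n) {a b : ℕ}
    (hab : xseq L a = xseq L b) : a % (2 * n) = b % (2 * n) := by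
  have h2n : 0 < 2 * n := by omega
  suffices key : ∀ a' b' : ℕ, a' < 2 * n → b' < 2 * n → a' ≤ b' → xseq L a' = xseq L b' →
      a' = b' by
    have hmod : xseq L (a % (2 * n)) = xseq L (b % (2 * n)) := by
      rw [← xseq_mod h hn, ← xseq_mod h hn]; exact hab
    rcases le_total (a % (2 * n)) (b % (2 * n)) with hle | hle
    · exact key _ _ (Nat.mod_lt _ h2n) (Nat.mod_lt _ h2n) hle hmod
    · exact (key _ _ (Nat.mod_lt _ h2n) (Nat.mod_lt _ h2n) hle hmod.symm).symm
  intro a' b' ha hb hle he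
  by_contra hne
  have hlt : a' < b' := lt_of_le_of_ne hle hne
  have hM : Good n (tstep^[a'] L) := good_iter h hn a'
  have hMlen : (tstep^[a'] L).length = n := hM.1
  have hb' : b' = a' + (b' - a') := by omega
  have h0 : xseq L a' = some ((tstep^[a'] L)[0]'(by omega)) := by
    have := xseq_add h hn a' (k := 0) hn
    rw [List.getElem?_eq_getElem (by omega)] at this
    simpa using this
  rcases lt_trichotomy (b' - a') n with h1 | h1 | h1
  · have hrr : xseq L b' = some ((tstep^[a'] L)[b' - a']'(by omega)) := by
      have := xseq_add h hn a' (k := b' - a') h1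
      rw [List.getElem?_eq_getElem (by omega)] at this
      conv_lhs => rw [hb']
      exact this
    rw [h0, hrr, Option.some_inj] at he
    have := fst_getElem_inj hM (i := 0) (j := b' - a') (by omega) (by omega) (by rw [he])
    omega
  · have hthis : xseq L b' = (xseq L a').map cneg := by
      conv_lhs => rw [hb', h1]
      exact xseq_add_n h hn a'
    rw [← he, h0] at hthis
    simp only [Option.map_some, Option.some_inj] at hthis
    exact cneg_ne _ hthis.symm
  · have hs2 : b' - a' - n < n := by omega
    have hbs : b' = (a' + (b' - a' - n)) + n := by omega
    have hss : xseq L (a' + (b' - a' - n)) =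
        some ((tstep^[a'] L)[b' - a' - n]'(by omega)) := by
      have := xseq_add h hn a' (k := b' - a' - n) hs2
      rw [List.getElem?_eq_getElem (by omega)] at this
      exact this
    have hthis : xseq L b' = (xseq L (a' + (b' - a' - n))).map cneg := by
      conv_lhs => rw [hbs]
      exact xseq_add_n h hn _
    rw [← he, h0, hss] at hthis
    simp only [Option.map_some, Option.some_inj] at hthis
    have hfst : ((tstep^[a'] L)[0]'(by omega)).1 =
        ((tstep^[a'] L)[b' - a' - n]'(by omega)).1 := by rw [hthis, cneg_fst]
    have := fst_getElem_inj hM (i := 0) (j := b' - a' - n) (by omega) (by omega) hfst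
    omega

lemma mem_of_nodup_full {n : ℕ} (l : List (Fin n)) (hnd : l.Nodup) (hlen : l.length = n)
    (x : Fin n) : x ∈ l := by
  have : l.toFinset = Finset.univ := by
    apply Finset.eq_univ_of_card
    rw [List.toFinset_card_of_nodup hnd, hlen, Fintype.card_fin]
  have hx : x ∈ l.toFinset := this ▸ Finset.mem_univ x
  simpa using hx

lemma good_iff_flag {n : ℕ} (L : List (Fin n × Bool)) :
    Good n L ↔ IsFlag n (crossFaces n) L := by
  constructor
  · intro h
    refine ⟨h.1, h.nodup, ?_⟩
    intro p hp hq
    simp only [List.mem_toFinset] at hp hq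
    have : p = (p.1, !p.2) := List.inj_on_of_nodup_map h.2 hp hq rfl
    have := congrArg Prod.snd this
    simp at this
  · rintro ⟨h1, h2, h3⟩
    refine ⟨h1, List.Nodup.map_on ?_ h2⟩
    intro p hp q hq he
    by_contra hne
    have hsnd : q.2 = !p.2 := by
      rcases Bool.eq_or_eq_not q.2 p.2 with e | e
      · exact absurd (Prod.ext he e.symm) hne
      · exact e
    have hq' : q = (p.1, !p.2) := Prod.ext he.symm hsnd
    refine h3 p ?_ ?_
    · simp only [List.mem_toFinset]; exact hp
    · simp only [List.mem_toFinset]; rw [← hq']; exact hq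

lemma tstep_TStep {n : ℕ} {L : List (Fin n × Bool)} (h : Good n L) (hn : 0 < n) :
    TStep n (crossFaces n) L (tstep L) := by
  refine ⟨(good_iff_flag L).mp h, (good_iff_flag _).mp (good_tstep h hn), ?_⟩
  cases L with
  | nil => exact absurd rfl (h.ne_nil hn)
  | cons a t =>
    refine ⟨cneg a, rfl, ?_⟩
    simp only [List.head?_cons, ne_eq, Option.some_inj]
    exact fun e => cneg_ne a (e ▸ rfl)

lemma TStep_unique {n : ℕ} {F G : List (Fin n × Bool)}
    (h : TStep n (crossFaces n) F G) (hn : 0 < n) : G = tstep F := by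
  obtain ⟨hF, hG, y, hGy, hy⟩ := h
  have hFg : Good n F := (good_iff_flag F).mpr hF
  have hGg : Good n G := (good_iff_flag G).mpr hG
  cases F with
  | nil => exact absurd rfl (hFg.ne_nil hn)
  | cons a t =>
    simp only [List.tail_cons] at hGy
    simp only [List.head?_cons, ne_eq, Option.some_inj] at hy
    rw [tstep_cons]
    rw [hGy]
    congr 1
    have hyne : y ≠ a := fun e => hy e.symm
    -- coordinates of F
    have hFco : (a.1 :: t.map Prod.fst).Nodup := by
      have := hFg.2; simpa using this
    have hFlen : (a.1 :: t.map Prod.fst).length = n := by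
      have := hFg.1; simpa using this
    have hymem : y.1 ∈ a.1 :: t.map Prod.fst :=
      mem_of_nodup_full _ hFco hFlen y.1
    have hGco : (t.map Prod.fst ++ [y.1]).Nodup := by
      have := hGg.2; rw [hGy] at this; simpa using this
    have hynotin : y.1 ∉ t.map Prod.fst := by
      rw [List.nodup_append] at hGco
      intro hmem
      exact hGco.2.2 _ hmem _ (List.mem_singleton_self _) rfl
    have hy1 : y.1 = a.1 := by
      rcases List.mem_cons.mp hymem with e | e
      · exact e
      · exact absurd e hynotin
    have hy2 : y.2 = !a.2 := by
      rcases Bool.eq_or_eq_not y.2 a.2 with e | e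
      · exact absurd (Prod.ext hy1 e) hyne
      · exact e
    have : y = cneg a := Prod.ext hy1 hy2
    rw [this]

lemma iter_eq_iff {n : ℕ} {G : List (Fin n × Bool)} (h : Good n G) (hn : 0 < n) {a b : ℕ} :
    tstep^[a] G = tstep^[b] G ↔ a % (2 * n) = b % (2 * n) := by
  constructor
  · intro e
    exact xseq_inj h hn (by rw [xseq, xseq, e])
  · intro e
    rw [iter_mod h hn a, iter_mod h hn b, e]

lemma zigzag_zig {n : ℕ} {G : List (Fin n × Bool)} (h : Good n G) (hn : 0 < n) :
    IsZigzag n (crossFaces n) (2 * n) (fun i => tstep^[i] G) := by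
  refine ⟨by omega, ?_, ?_, ?_⟩
  · intro i
    have he : tstep^[i + 1] G = tstep (tstep^[i] G) := Function.iterate_succ_apply' _ _ _
    simpa only [he] using tstep_TStep (good_iter h hn i) hn
  · intro i
    simp only
    rw [Function.iterate_add_apply, tstep_iter_two_n h]
  · intro m hm hper
    have h0 : tstep^[m] G = tstep^[0] G := by simpa using hper 0
    have := (iter_eq_iff h hn).mp h0
    simp only [Nat.zero_mod] at this
    have hd : 2 * n ∣ m := Nat.dvd_of_mod_eq_zero this
    exact Nat.le_of_dvd hm hd

lemma zigzag_eq_zig {n l : ℕ} {F : ℕ → List (Fin n × Bool)}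
    (hz : IsZigzag n (crossFaces n) l F) (hn : 0 < n) :
    Good n (F 0) ∧ ∀ i, F i = tstep^[i] (F 0) := by
  have hg : Good n (F 0) := (good_iff_flag _).mpr (hz.2.1 0).1
  refine ⟨hg, ?_⟩
  intro i
  induction i with
  | zero => rfl
  | succ i ih =>
    rw [Function.iterate_succ_apply', ← ih]
    exact TStep_unique (hz.2.1 i) hn

lemma zigzag_length {n l : ℕ} {F : ℕ → List (Fin n × Bool)}
    (hz : IsZigzag n (crossFaces n) l F) (hn : 0 < n) : l = 2 * n := by
  obtain ⟨hg, hF⟩ := zigzag_eq_zig hz hn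
  have h1 : l ≤ 2 * n := by
    refine hz.2.2.2 (2 * n) (by omega) (fun i => ?_)
    rw [hF (i + 2 * n), hF i, Function.iterate_add_apply, tstep_iter_two_n hg]
  have h2 : tstep^[l] (F 0) = tstep^[0] (F 0) := by
    rw [← hF l]
    simpa using hz.2.2.1 0
  have h3 := (iter_eq_iff hg hn).mp h2
  simp only [Nat.zero_mod] at h3
  have hd : 2 * n ∣ l := Nat.dvd_of_mod_eq_zero h3
  have := Nat.le_of_dvd hz.1 hd
  omega

lemma iter_head_n {n : ℕ} {G : List (Fin n × Bool)} (h : Good n G) (hn : 0 < n) (m : ℕ) :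
    (tstep^[m + n] G).head? = ((tstep^[m] G).head?).map cneg := by
  rw [Nat.add_comm, Function.iterate_add_apply, tstep_iter_n (good_iter h hn m),
    List.head?_map]

lemma good_reverse {n : ℕ} {L : List (Fin n × Bool)} (h : Good n L) : Good n L.reverse := by
  refine ⟨by simpa using h.1, ?_⟩
  rw [List.map_reverse, List.nodup_reverse]
  exact h.2

lemma tstep_drop_take {n : ℕ} (L : List (Fin n × Bool)) :
    tstep L = L.drop 1 ++ (L.take 1).map cneg := by
  cases L with
  | nil => rfl
  | cons a t => simp [tstep_cons]

lemma xseq_congr {n : ℕ} {G : List (Fin n × Bool)} (h : Good n G) (hn : 0 < n) {a b : ℕ}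
    (hab : a % (2 * n) = b % (2 * n)) : xseq G a = xseq G b := by
  rw [xseq_mod h hn a, xseq_mod h hn b, hab]

lemma iter_getElem_eq {n : ℕ} {G : List (Fin n × Bool)} (h : Good n G) (hn : 0 < n)
    {a b ka kb : ℕ} (hka : ka < n) (hkb : kb < n)
    (hmod : (a + ka) % (2 * n) = (b + kb) % (2 * n)) :
    (tstep^[a] G)[ka]'(by rw [(good_iter h hn a).1]; omega) =
      (tstep^[b] G)[kb]'(by rw [(good_iter h hn b).1]; omega) := by
  have e1 := xseq_add h hn a hka
  have e2 := xseq_add h hn b hkb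
  rw [List.getElem?_eq_getElem (by rw [(good_iter h hn a).1]; omega)] at e1
  rw [List.getElem?_eq_getElem (by rw [(good_iter h hn b).1]; omega)] at e2
  have := e1.symm.trans ((xseq_congr h hn hmod).trans e2)
  exact Option.some_inj.mp this

lemma iter_getElem_cneg {n : ℕ} {G : List (Fin n × Bool)} (h : Good n G) (hn : 0 < n)
    {a b ka kb : ℕ} (hka : ka < n) (hkb : kb < n)
    (hmod : (a + ka + n) % (2 * n) = (b + kb) % (2 * n)) :
    cneg ((tstep^[a] G)[ka]'(by rw [(good_iter h hn a).1]; omega)) =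
      (tstep^[b] G)[kb]'(by rw [(good_iter h hn b).1]; omega) := by
  have e1 := xseq_add h hn a hka
  have e2 := xseq_add h hn b hkb
  rw [List.getElem?_eq_getElem (by rw [(good_iter h hn a).1]; omega)] at e1
  rw [List.getElem?_eq_getElem (by rw [(good_iter h hn b).1]; omega)] at e2
  have e3 : xseq G (a + ka + n) = (xseq G (a + ka)).map cneg := xseq_add_n h hn _
  rw [e1] at e3
  have := e3.symm.trans ((xseq_congr h hn hmod).trans e2)
  simp only [Option.map_some, Option.some_inj] at this
  exact this

lemma tstep_rev_step {n : ℕ} {G : List (Fin n × Bool)} (h : Good n G) (hn2 : 2 ≤ n) (i : ℕ) :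
    tstep ((tstep^[i] G).reverse) = (tstep^[i + (2 * n - 1)] G).reverse := by
  have hn : 0 < n := by omega
  have hMlen : (tstep^[i] G).length = n := (good_iter h hn i).1
  have hRlen : (tstep^[i + (2 * n - 1)] G).length = n := (good_iter h hn _).1
  have hAlen : ((tstep^[i] G).reverse).length = n := by simpa using hMlen
  have hAne : (tstep^[i] G).reverse ≠ [] := by
    intro e; rw [e] at hAlen; simp at hAlen; omega
  apply List.ext_getElem
  · rw [tstep_length _ hAne, hAlen, List.length_reverse, hRlen]
  · intro k hk1 hk2
    have hkn : k < n := by rwa [tstep_length _ hAne, hAlen] at hk1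
    have egr : ∀ (j : ℕ) (hj : j < n),
        ((tstep^[i] G).reverse)[j]'(by omega) =
          (tstep^[i] G)[n - 1 - j]'(by omega) := by
      intro j hj
      rw [List.getElem_reverse]
      congr 1
      omega
    rw [List.getElem_reverse]
    have hidx : (tstep^[i + (2 * n - 1)] G).length - 1 - k = n - 1 - k := by rw [hRlen]
    rcases Nat.lt_or_ge k (n - 1) with hc | hc
    · -- k < n - 1
      have e0 : (tstep ((tstep^[i] G).reverse))[k]'hk1 =
          (((tstep^[i] G).reverse).drop 1 ++ (((tstep^[i] G).reverse).take 1).map cneg)[k]'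
            (by rw [← tstep_drop_take]; exact hk1) :=
        List.getElem_of_eq (tstep_drop_take _) hk1
      have e1 : (tstep ((tstep^[i] G).reverse))[k]'hk1 =
          ((tstep^[i] G).reverse)[k + 1]'(by omega) := by
        rw [e0]
        rw [List.getElem_append_left (by rw [List.length_drop, hAlen]; omega)]
        rw [List.getElem_drop]
        congr 1
        omega
      refine e1.trans ((egr (k + 1) (by omega)).trans ?_)
      simp only [hRlen]
      refine iter_getElem_eq h hn (by omega) (by omega) ?_
      have harith : i + (2 * n - 1) + (n - 1 - k) = (i + (n - 1 - (k + 1))) + 2 * n := by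
        omega
      rw [harith, Nat.add_mod_right]
    · -- k = n - 1
      have hkeq : k = n - 1 := by omega
      have e0 : (tstep ((tstep^[i] G).reverse))[k]'hk1 =
          (((tstep^[i] G).reverse).drop 1 ++ (((tstep^[i] G).reverse).take 1).map cneg)[k]'
            (by rw [← tstep_drop_take]; exact hk1) :=
        List.getElem_of_eq (tstep_drop_take _) hk1
      have e1 : (tstep ((tstep^[i] G).reverse))[k]'hk1 =
          cneg (((tstep^[i] G).reverse)[0]'(by omega)) := by
        rw [e0]
        rw [List.getElem_append_right (by rw [List.length_drop, hAlen]; omega)]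
        have ht : ((tstep^[i] G).reverse).take 1 =
            [((tstep^[i] G).reverse)[0]'(by omega)] := by
          rw [List.take_one]
          rw [List.head?_eq_getElem?, List.getElem?_eq_getElem (by omega)]
          rfl
        simp only [ht, List.map_cons, List.map_nil]
        have : k - ((tstep^[i] G).reverse.drop 1).length = 0 := by
          rw [List.length_drop, hAlen]; omega
        simp [this]
      refine e1.trans ((congrArg cneg (egr 0 (by omega))).trans ?_)
      simp only [hRlen]
      refine iter_getElem_cneg h hn (by omega) (by omega) ?_
      have harith : i + (2 * n - 1) + (n - 1 - k) = i + (n - 1 - 0) + n := by omega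
      rw [harith]
    
lemma iter_rev {n : ℕ} {G : List (Fin n × Bool)} (h : Good n G) (hn2 : 2 ≤ n) (j : ℕ) :
    tstep^[j] G.reverse = (tstep^[(2 * n - 1) * j] G).reverse := by
  induction j with
  | zero => simp
  | succ j ih =>
    rw [Function.iterate_succ_apply', ih, tstep_rev_step h hn2]
    congr 2

def Orb {n : ℕ} (G : List (Fin n × Bool)) : Set (List (Fin n × Bool)) :=
  Set.range fun i => tstep^[i] G

lemma class_eq_orb {n : ℕ} (G : List (Fin n × Bool)) :
    ZigzagClass (fun i => tstep^[i] G) = Orb G ∪ List.reverse '' Orb G := by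
  unfold ZigzagClass Orb
  congr 1
  exact Set.range_comp List.reverse fun i => tstep^[i] G

lemma orb_shift {n : ℕ} {G : List (Fin n × Bool)} (h : Good n G) (hn : 0 < n) (i : ℕ) :
    Orb (tstep^[i] G) = Orb G := by
  ext L
  constructor
  · rintro ⟨j, rfl⟩
    exact ⟨j + i, by simp only; rw [Function.iterate_add_apply]⟩
  · rintro ⟨k, rfl⟩
    refine ⟨k + 2 * n * (i + 1) - i, ?_⟩
    simp only
    rw [← Function.iterate_add_apply]
    apply (iter_eq_iff h hn).mpr
    have hle : i + 1 ≤ 2 * n * (i + 1) := Nat.le_mul_of_pos_left _ (by omega)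
    have e : k + 2 * n * (i + 1) - i + i = k + 2 * n * (i + 1) := by omega
    rw [e, Nat.add_mul_mod_self_left]

lemma mod_helper (n k : ℕ) (hn : 0 < n) :
    ((2 * n - 1) * ((2 * n - 1) * k)) % (2 * n) = k % (2 * n) := by
  obtain ⟨m, rfl⟩ : ∃ m, n = m + 1 := ⟨n - 1, by omega⟩
  have e : 2 * (m + 1) - 1 = 2 * m + 1 := by omega
  rw [e]
  have e2 : (2 * m + 1) * ((2 * m + 1) * k) = k + 2 * (m + 1) * (2 * m * k) := by ring
  rw [e2, Nat.add_mul_mod_self_left]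

lemma orb_rev {n : ℕ} {G : List (Fin n × Bool)} (h : Good n G) (hn2 : 2 ≤ n) :
    Orb G.reverse = List.reverse '' Orb G := by
  have hn : 0 < n := by omega
  ext L
  constructor
  · rintro ⟨j, rfl⟩
    exact ⟨tstep^[(2 * n - 1) * j] G, ⟨_, rfl⟩, (iter_rev h hn2 j).symm⟩
  · rintro ⟨M, ⟨k, rfl⟩, rfl⟩
    refine ⟨(2 * n - 1) * k, ?_⟩
    simp only
    rw [iter_rev h hn2]
    congr 1
    exact (iter_eq_iff h hn).mpr (mod_helper n k hn)

lemma orb_eq_image {n : ℕ} {G : List (Fin n × Bool)} (h : Good n G) (hn : 0 < n) :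
    Orb G = (fun i => tstep^[i] G) '' Set.Iio (2 * n) := by
  ext L
  constructor
  · rintro ⟨k, rfl⟩
    exact ⟨k % (2 * n), Nat.mod_lt _ (by omega), (iter_mod h hn k).symm⟩
  · rintro ⟨k, _, rfl⟩
    exact ⟨k, rfl⟩

lemma orb_finite {n : ℕ} {G : List (Fin n × Bool)} (h : Good n G) (hn : 0 < n) :
    (Orb G).Finite := by
  rw [orb_eq_image h hn]
  exact (Set.finite_Iio _).image _

lemma orb_ncard {n : ℕ} {G : List (Fin n × Bool)} (h : Good n G) (hn : 0 < n) :
    (Orb G).ncard = 2 * n := by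
  rw [orb_eq_image h hn, Set.ncard_image_of_injOn, ← Finset.coe_range,
    Set.ncard_coe_finset, Finset.card_range]
  intro a ha b hb he
  have := (iter_eq_iff h hn).mp he
  simp only [Set.mem_Iio] at ha hb
  rwa [Nat.mod_eq_of_lt ha, Nat.mod_eq_of_lt hb] at this

lemma good_mem_orb {n : ℕ} {G L : List (Fin n × Bool)} (h : Good n G) (hn : 0 < n)
    (hL : L ∈ Orb G ∪ List.reverse '' Orb G) : Good n L := by
  rcases hL with ⟨i, rfl⟩ | ⟨M, ⟨i, rfl⟩, rfl⟩
  · exact good_iter h hn i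
  · exact good_reverse (good_iter h hn i)

lemma orb_disjoint_rev {n : ℕ} {G : List (Fin n × Bool)} (h : Good n G) (hn2 : 2 ≤ n) :
    Disjoint (Orb G) (List.reverse '' Orb G) := by
  have hn : 0 < n := by omega
  rw [Set.disjoint_left]
  rintro L ⟨i, rfl⟩ ⟨M, ⟨j, rfl⟩, hrev⟩
  simp only at hrev
  have hjlen : (tstep^[j] G).length = n := (good_iter h hn j).1
  have hk : ∀ k : ℕ, k < n → xseq G (i + k) = xseq G (j + (n - 1 - k)) := by
    intro k hkn
    rw [xseq_add h hn i hkn, xseq_add h hn j (show n - 1 - k < n by omega)]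
    rw [← hrev]
    rw [List.getElem?_reverse (by rw [hjlen]; omega)]
    congr 1
    rw [hjlen]
  have m1 : i % (2 * n) = (j + (n - 1)) % (2 * n) := by
    have := xseq_inj h hn (hk 0 hn)
    simpa using this
  have m2 : (i + 1) % (2 * n) = (j + (n - 2)) % (2 * n) := by
    have := xseq_inj h hn (hk 1 (by omega))
    have e : n - 1 - 1 = n - 2 := by omega
    rwa [e] at this
  have m1' : (i + 1) % (2 * n) = (j + (n - 1) + 1) % (2 * n) :=
    Nat.ModEq.add_right 1 m1
  have m3 : (j + (n - 2)) % (2 * n) = (j + (n - 1) + 1) % (2 * n) := m2.symm.trans m1'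
  have hle : j + (n - 2) ≤ j + (n - 1) + 1 := by omega
  have hdvd := (Nat.modEq_iff_dvd' hle).mp m3
  have e : (j + (n - 1) + 1) - (j + (n - 2)) = 2 := by omega
  rw [e] at hdvd
  have := Nat.le_of_dvd (by omega) hdvd
  omega

lemma class_eq_iff {n : ℕ} {G G' : List (Fin n × Bool)} (h : Good n G) (h' : Good n G')
    (hn2 : 2 ≤ n) :
    ZigzagClass (fun i => tstep^[i] G') = ZigzagClass (fun i => tstep^[i] G) ↔
      G' ∈ Orb G ∪ List.reverse '' Orb G := by
  have hn : 0 < n := by omega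
  constructor
  · intro he
    have hmem : G' ∈ ZigzagClass (fun i => tstep^[i] G') := Or.inl ⟨0, rfl⟩
    rw [he, class_eq_orb] at hmem
    exact hmem
  · have hrevrev : List.reverse '' (List.reverse '' Orb G) = Orb G := by
      rw [Set.image_image]
      simp
    rintro (⟨i, rfl⟩ | ⟨M, ⟨i, rfl⟩, rfl⟩)
    · rw [class_eq_orb, class_eq_orb, orb_shift h hn i]
    · simp only
      rw [class_eq_orb, class_eq_orb, orb_rev (good_iter h hn i) hn2, orb_shift h hn i,
        hrevrev]
      exact Set.union_comm _ _

lemma class_ncard {n : ℕ} {G : List (Fin n × Bool)} (h : Good n G) (hn2 : 2 ≤ n) :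
    (ZigzagClass (fun i => tstep^[i] G)).ncard = 4 * n := by
  have hn : 0 < n := by omega
  rw [class_eq_orb]
  rw [Set.ncard_union_eq (orb_disjoint_rev h hn2) (orb_finite h hn)
    ((orb_finite h hn).image _)]
  rw [orb_ncard h hn, Set.ncard_image_of_injective _ List.reverse_injective, orb_ncard h hn]
  omega

def flagEmb (n : ℕ) (σb : Equiv.Perm (Fin n) × (Fin n → Bool)) : List (Fin n × Bool) :=
  List.ofFn fun i => (σb.1 i, σb.2 i)

lemma flagEmb_injective (n : ℕ) : Function.Injective (flagEmb n) := by
  intro a b he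
  rw [flagEmb, flagEmb, List.ofFn_inj] at he
  have h1 : ∀ i, a.1 i = b.1 i ∧ a.2 i = b.2 i := fun i =>
    ⟨congrArg Prod.fst (congrFun he i), congrArg Prod.snd (congrFun he i)⟩
  exact Prod.ext (Equiv.ext fun i => (h1 i).1) (funext fun i => (h1 i).2)

lemma range_flagEmb (n : ℕ) (hn : 0 < n) : Set.range (flagEmb n) = {L | Good n L} := by
  ext L
  constructor
  · rintro ⟨⟨σ, b⟩, rfl⟩
    constructor
    · simp [flagEmb]
    · rw [flagEmb, List.map_ofFn]
      refine List.nodup_ofFn.mpr ?_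
      intro x y he
      exact σ.injective he
  · intro hL
    have hlen : L.length = n := hL.1
    have hfst_inj : Function.Injective fun i : Fin n => (L[(i : ℕ)]'(by omega)).1 := by
      intro x y he
      have := fst_getElem_inj hL (by omega) (by omega) he
      exact Fin.ext this
    let σ : Equiv.Perm (Fin n) :=
      Equiv.ofBijective _ (Finite.injective_iff_bijective.mp hfst_inj)
    refine ⟨⟨σ, fun i => (L[(i : ℕ)]'(by omega)).2⟩, ?_⟩
    rw [flagEmb]
    apply List.ext_getElem
    · simpa using hlen.symm
    · intro k h1 h2
      rw [List.getElem_ofFn]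
      exact Prod.ext rfl rfl

lemma good_ncard (n : ℕ) (hn : 0 < n) :
    {L : List (Fin n × Bool) | Good n L}.ncard = 2 ^ n * n.factorial := by
  rw [← range_flagEmb n hn]
  have h1 : (Set.range (flagEmb n)).ncard
      = Nat.card (Equiv.Perm (Fin n) × (Fin n → Bool)) := by
    rw [← Nat.card_coe_set_eq]
    exact Nat.card_range_of_injective (flagEmb_injective n)
  rw [h1, Nat.card_eq_fintype_card, Fintype.card_prod, Fintype.card_perm, Fintype.card_fun]
  simp only [Fintype.card_fin, Fintype.card_bool]
  ring

lemma zigzag_count {n : ℕ} (hn2 : 2 ≤ n) :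
    {S : Set (List (Fin n × Bool)) | ∃ (l : ℕ) (F : ℕ → List (Fin n × Bool)),
        IsZigzag n (crossFaces n) l F ∧ S = ZigzagClass F}.ncard =
      2 ^ (n - 2) * (n - 1).factorial := by
  have hn : 0 < n := by omega
  classical
  have hfin : {L : List (Fin n × Bool) | Good n L}.Finite := by
    rw [← range_flagEmb n hn]; exact Set.finite_range _
  set Ffin := hfin.toFinset with hFdef
  set cl : List (Fin n × Bool) → Set (List (Fin n × Bool)) :=
    fun G => ZigzagClass (fun i => tstep^[i] G) with hcl
  have hZ : {S : Set (List (Fin n × Bool)) | ∃ (l : ℕ) (F : ℕ → List (Fin n × Bool)),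
      IsZigzag n (crossFaces n) l F ∧ S = ZigzagClass F} = ↑(Ffin.image cl) := by
    ext S
    simp only [Finset.coe_image, Set.mem_image, Finset.mem_coe, Set.mem_setOf_eq]
    constructor
    · rintro ⟨l, F, hz, rfl⟩
      obtain ⟨hg, hFi⟩ := zigzag_eq_zig hz hn
      refine ⟨F 0, hfin.mem_toFinset.mpr hg, ?_⟩
      exact (congrArg ZigzagClass (funext fun i => hFi i)).symm
    · rintro ⟨G, hG, rfl⟩
      have hg : Good n G := hfin.mem_toFinset.mp hG
      exact ⟨2 * n, fun i => tstep^[i] G, zigzag_zig hg hn, rfl⟩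
  rw [hZ, Set.ncard_coe_finset]
  have hfiber : ∀ S ∈ Ffin.image cl, (Ffin.filter fun G => cl G = S).card = 4 * n := by
    intro S hS
    obtain ⟨G0, hG0, rfl⟩ := Finset.mem_image.mp hS
    have hg0 : Good n G0 := hfin.mem_toFinset.mp hG0
    have hset : ↑(Ffin.filter fun G => cl G = cl G0) =
        Orb G0 ∪ List.reverse '' Orb G0 := by
      ext L
      simp only [Finset.coe_filter, Set.mem_setOf_eq, Set.Finite.mem_toFinset,
        hFdef]
      constructor
      · rintro ⟨hL, he⟩
        exact (class_eq_iff hg0 (by simpa using hL) hn2).mp he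
      · intro hmem
        have hgL : Good n L := good_mem_orb hg0 hn hmem
        exact ⟨by simpa using hgL, (class_eq_iff hg0 hgL hn2).mpr hmem⟩
    have : (↑(Ffin.filter fun G => cl G = cl G0) :
        Set (List (Fin n × Bool))).ncard = 4 * n := by
      rw [hset, ← class_eq_orb, class_ncard hg0 hn2]
    rwa [Set.ncard_coe_finset] at this
  have hcard : Ffin.card = (Ffin.image cl).card * (4 * n) := by
    rw [Finset.card_eq_sum_card_fiberwise
      (fun x hx => Finset.mem_image_of_mem cl hx)]
    rw [Finset.sum_congr rfl hfiber, Finset.sum_const, smul_eq_mul]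
  have htotal : Ffin.card = 2 ^ n * n.factorial := by
    rw [hFdef, ← Set.ncard_eq_toFinset_card _ hfin]
    exact good_ncard n hn
  have harith : (2 ^ (n - 2) * (n - 1).factorial) * (4 * n) = 2 ^ n * n.factorial := by
    have e1 : 2 ^ (n - 2) * 4 = 2 ^ n := by
      have : n - 2 + 2 = n := by omega
      rw [← this, pow_add]
      norm_num
    have e2 : n * (n - 1).factorial = n.factorial := Nat.mul_factorial_pred hn.ne'
    calc (2 ^ (n - 2) * (n - 1).factorial) * (4 * n)
        = (2 ^ (n - 2) * 4) * (n * (n - 1).factorial) := by ring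
      _ = 2 ^ n * n.factorial := by rw [e1, e2]
  have := hcard.symm.trans htotal
  rw [← harith] at this
  exact Nat.eq_of_mul_eq_mul_right (by omega) this

/-- Every zigzag in the cross-polytope `β_n` has length `2n`, its 0-shadow
satisfies `x_{i+n} = -x_i` (so, up to cyclic shift, it has the form
`i_1, …, i_n, -i_1, …, -i_n` with `{i_1,…,i_n}` a facet), and for `n ≥ 2` there are exactly
`2^{n-2}·(n-1)!` zigzags, identifying each zigzag with its reverse. -/
theorem stmt10 (n : ℕ) (hn : 2 ≤ n) :
    (∀ (l : ℕ) (F : ℕ → List (Fin n × Bool)), IsZigzag n (crossFaces n) l F →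
      l = 2 * n ∧ ∀ i : ℕ, (F (i + n)).head? = ((F i).head?).map fun p => (p.1, !p.2)) ∧
    {S : Set (List (Fin n × Bool)) | ∃ (l : ℕ) (F : ℕ → List (Fin n × Bool)),
        IsZigzag n (crossFaces n) l F ∧ S = ZigzagClass F}.ncard =
      2 ^ (n - 2) * (n - 1).factorial := by
  have hn0 : 0 < n := by omega
  constructor
  · intro l F hz
    obtain ⟨hg, hFi⟩ := zigzag_eq_zig hz hn0
    refine ⟨zigzag_length hz hn0, ?_⟩
    intro i
    rw [hFi (i + n), hFi i]
    exact iter_head_n hg hn0 i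
  · exact zigzag_count hn
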